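/- For β > 1 and fixed j, the normalized Beta-Shapley coefficient (γ_n)^{-1} · w_{α,β}^{(n)}(j)·C(n-1,j-1)·(1/j) converges to 0 as n → ∞, where γ_n = ∑_{i=1}^{n} w_{α,β}^{(n)}(i)·C(n-1,i-1)·(1/i) and w_{α,β}^{(n)}(j) = n·Beta(j+β-1, n-j+α)/Beta(α,β). -/

import Mathlib

open Finset Filter MeasureTheory Set

noncomputable def Beta (x y : ℝ) : ℝ := Real.Gamma x * Real.Gamma y / Real.Gamma (x + y)

/-- The Beta-Shapley weight `w_{α,β}^{(n)}(j)`. -/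
noncomputable def betaWeight (α β : ℝ) (n j : ℕ) : ℝ :=
  (n : ℝ) * Beta ((j : ℝ) + β - 1) ((n : ℝ) - (j : ℝ) + α) / Beta α β

lemma Beta_pos {x y : ℝ} (hx : 0 < x) (hy : 0 < y) : 0 < Beta x y := by
  unfold Beta
  have := Real.Gamma_pos_of_pos hx
  have := Real.Gamma_pos_of_pos hy
  have := Real.Gamma_pos_of_pos (add_pos hx hy)
  positivity

lemma Beta_symm (x y : ℝ) : Beta x y = Beta y x := by
  unfold Beta; rw [add_comm, mul_comm]

lemma betaIntegrand_integrableOn {x y : ℝ} (hx : 0 < x) (hy : 0 < y) :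
    IntegrableOn (fun t : ℝ => t ^ (x - 1) * (1 - t) ^ (y - 1)) (Set.Ioo 0 1) := by
  have hc : IntervalIntegrable
      (fun t : ℝ => (t : ℂ) ^ ((x : ℂ) - 1) * (1 - (t : ℂ)) ^ ((y : ℂ) - 1))
      volume 0 1 :=
    Complex.betaIntegral_convergent (by simpa using hx) (by simpa using hy)
  have hIoc : IntegrableOn
      (fun t : ℝ => (t : ℂ) ^ ((x : ℂ) - 1) * (1 - (t : ℂ)) ^ ((y : ℂ) - 1))
      (Set.Ioc 0 1) volume :=
    (intervalIntegrable_iff_integrableOn_Ioc_of_le zero_le_one).mp hc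
  have hIoo := hIoc.mono_set Set.Ioo_subset_Ioc_self
  have hnorm := hIoo.norm
  refine MeasureTheory.IntegrableOn.congr_fun hnorm (fun t ht => ?_) measurableSet_Ioo
  obtain ⟨ht0, ht1⟩ := ht
  have h1t : (0:ℝ) < 1 - t := by linarith
  rw [norm_mul]
  rw [show (1 : ℂ) - (t : ℂ) = ((1 - t : ℝ) : ℂ) by push_cast; ring]
  rw [Complex.norm_cpow_eq_rpow_re_of_pos ht0, Complex.norm_cpow_eq_rpow_re_of_pos h1t]
  norm_num

lemma betaIntegral_real {x y : ℝ} (hx : 0 < x) (hy : 0 < y) :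
    ∫ t in Set.Ioo (0:ℝ) 1, t ^ (x - 1) * (1 - t) ^ (y - 1) = Beta x y := by
  have key := Complex.Gamma_mul_Gamma_eq_betaIntegral
    (by simpa using hx : 0 < ((x:ℂ)).re) (by simpa using hy : 0 < ((y:ℂ)).re)
  have hBI : Complex.betaIntegral (x : ℂ) (y : ℂ) =
      ((∫ t in Set.Ioo (0:ℝ) 1, t ^ (x - 1) * (1 - t) ^ (y - 1) : ℝ) : ℂ) := by
    rw [Complex.betaIntegral, intervalIntegral.integral_of_le zero_le_one,
      MeasureTheory.integral_Ioc_eq_integral_Ioo]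
    rw [show ((∫ t in Set.Ioo (0:ℝ) 1, t ^ (x - 1) * (1 - t) ^ (y - 1) : ℝ) : ℂ) =
        ∫ t in Set.Ioo (0:ℝ) 1, ((t ^ (x - 1) * (1 - t) ^ (y - 1) : ℝ) : ℂ) from
      (integral_ofReal).symm]
    refine setIntegral_congr_fun measurableSet_Ioo (fun t ht => ?_)
    obtain ⟨ht0, ht1⟩ := ht
    push_cast
    rw [Complex.ofReal_cpow ht0.le, Complex.ofReal_cpow (by linarith : (0:ℝ) ≤ 1 - t)]
    push_cast
    ring
  rw [hBI, Complex.Gamma_ofReal, Complex.Gamma_ofReal, show ((x:ℂ) + y) = ((x + y : ℝ) : ℂ) by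
    push_cast; ring, Complex.Gamma_ofReal] at key
  have key2 : Real.Gamma x * Real.Gamma y =
      Real.Gamma (x + y) * ∫ t in Set.Ioo (0:ℝ) 1, t ^ (x - 1) * (1 - t) ^ (y - 1) := by
    exact_mod_cast key
  have hG : Real.Gamma (x + y) ≠ 0 := (Real.Gamma_pos_of_pos (add_pos hx hy)).ne'
  rw [Beta, key2, mul_div_cancel_left₀ _ hG]

lemma choose_id {n i : ℕ} (hi : 1 ≤ i) : (n : ℝ) * ((n - 1).choose (i - 1) : ℝ) * (1 / (i : ℝ)) = (n.choose i : ℝ) := by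
  rcases Nat.eq_zero_or_pos n with hn | hn
  · subst hn
    rw [Nat.choose_eq_zero_of_lt hi]
    simp
  · have key : n * ((n-1).choose (i-1)) = n.choose i * i := by
      have h1 := Nat.add_one_mul_choose_eq (n-1) (i-1)
      rw [show n - 1 + 1 = n from by omega, show i - 1 + 1 = i from by omega] at h1
      exact h1
    have hi' : (i : ℝ) ≠ 0 := Nat.cast_ne_zero.mpr (by omega)
    field_simp
    exact_mod_cast key.trans (mul_comm _ _)

lemma binom_sum (t : ℝ) (n : ℕ) :
    ∑ i ∈ Finset.Icc 1 n, (n.choose i : ℝ) * (t ^ i * (1 - t) ^ (n - i)) = 1 - (1 - t) ^ n := by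
  have h := add_pow t (1 - t) n
  rw [show t + (1 - t) = 1 by ring, one_pow] at h
  have hr : Finset.range (n + 1) = insert 0 (Finset.Icc 1 n) := by
    ext k; simp only [Finset.mem_range, Finset.mem_insert, Finset.mem_Icc]; omega
  rw [hr, Finset.sum_insert (by simp)] at h
  simp only [pow_zero, Nat.sub_zero, Nat.choose_zero_right, Nat.cast_one, one_mul, mul_one] at h
  have : ∑ i ∈ Finset.Icc 1 n, (n.choose i : ℝ) * (t ^ i * (1 - t) ^ (n - i)) =
      ∑ i ∈ Finset.Icc 1 n, t ^ i * (1 - t) ^ (n - i) * (n.choose i : ℝ) := by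
    apply Finset.sum_congr rfl; intro i _; ring
  rw [this]; linarith

lemma sum_ge_one {α β : ℝ} (hα : 0 < α) (hβ : 1 < β) {n : ℕ} (hn : 1 ≤ n) :
    1 ≤ ∑ i ∈ Finset.Icc 1 n,
        betaWeight α β n i * ((n - 1).choose (i - 1) : ℝ) * (1 / (i : ℝ)) := by
  have hB : 0 < Beta α β := Beta_pos hα (by linarith)
  set S := ∑ i ∈ Finset.Icc 1 n,
      betaWeight α β n i * ((n - 1).choose (i - 1) : ℝ) * (1 / (i : ℝ)) with hS
  -- integrand family
  have hxpos : ∀ i ∈ Finset.Icc 1 n, (0:ℝ) < (i : ℝ) + β - 1 := by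
    intro i hi
    simp only [Finset.mem_Icc] at hi
    have : (1:ℝ) ≤ (i:ℝ) := by exact_mod_cast hi.1
    linarith
  have hypos : ∀ i ∈ Finset.Icc 1 n, (0:ℝ) < (n : ℝ) - (i : ℝ) + α := by
    intro i hi
    simp only [Finset.mem_Icc] at hi
    have : (i:ℝ) ≤ (n:ℝ) := by exact_mod_cast hi.2
    linarith
  have hint : ∀ i ∈ Finset.Icc 1 n, IntegrableOn
      (fun t : ℝ => (n.choose i : ℝ) * (t ^ ((i:ℝ) + β - 1 - 1) * (1 - t) ^ ((n:ℝ) - (i:ℝ) + α - 1)))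
      (Set.Ioo (0:ℝ) 1) := fun i hi =>
    (betaIntegrand_integrableOn (hxpos i hi) (hypos i hi)).const_mul _
  have key : S * Beta α β = ∫ t in Set.Ioo (0:ℝ) 1,
      ∑ i ∈ Finset.Icc 1 n, (n.choose i : ℝ) *
        (t ^ ((i:ℝ) + β - 1 - 1) * (1 - t) ^ ((n:ℝ) - (i:ℝ) + α - 1)) := by
    rw [Finset.sum_mul, MeasureTheory.integral_finset_sum _ hint]
    apply Finset.sum_congr rfl
    intro i hi
    rw [MeasureTheory.integral_const_mul _ _, betaIntegral_real (hxpos i hi) (hypos i hi)]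
    simp only [Finset.mem_Icc] at hi
    rw [betaWeight]
    rw [show (n:ℝ) * Beta ((i:ℝ) + β - 1) ((n:ℝ) - (i:ℝ) + α) / Beta α β *
        ((n - 1).choose (i - 1) : ℝ) * (1 / (i : ℝ)) * Beta α β =
        ((n:ℝ) * ((n - 1).choose (i - 1) : ℝ) * (1 / (i : ℝ))) *
        Beta ((i:ℝ) + β - 1) ((n:ℝ) - (i:ℝ) + α) * (Beta α β / Beta α β) by ring,
      div_self hB.ne', mul_one, choose_id hi.1]
  have lower : Beta β α ≤ ∫ t in Set.Ioo (0:ℝ) 1,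
      ∑ i ∈ Finset.Icc 1 n, (n.choose i : ℝ) *
        (t ^ ((i:ℝ) + β - 1 - 1) * (1 - t) ^ ((n:ℝ) - (i:ℝ) + α - 1)) := by
    rw [← betaIntegral_real (by linarith : (0:ℝ) < β) hα]
    apply MeasureTheory.setIntegral_mono_on
      (betaIntegrand_integrableOn (by linarith) hα)
      (MeasureTheory.integrable_finset_sum _ hint)
      measurableSet_Ioo
    intro t ht
    obtain ⟨ht0, ht1⟩ := ht
    have h1t : (0:ℝ) < 1 - t := by linarith
    have hsum : ∀ i ∈ Finset.Icc 1 n, (n.choose i : ℝ) *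
        (t ^ ((i:ℝ) + β - 1 - 1) * (1 - t) ^ ((n:ℝ) - (i:ℝ) + α - 1)) =
        ((n.choose i : ℝ) * (t ^ i * (1 - t) ^ (n - i))) * (t ^ (β - 2) * (1 - t) ^ (α - 1)) := by
      intro i hi
      simp only [Finset.mem_Icc] at hi
      have e1 : t ^ ((i:ℝ) + β - 1 - 1) = t ^ (i:ℕ) * t ^ (β - 2) := by
        rw [← Real.rpow_natCast t i, ← Real.rpow_add ht0]
        ring_nf
      have e2 : (1 - t) ^ ((n:ℝ) - (i:ℝ) + α - 1) = (1 - t) ^ (n - i : ℕ) * (1 - t) ^ (α - 1) := by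
        rw [← Real.rpow_natCast (1 - t) (n - i), ← Real.rpow_add h1t]
        congr 1
        rw [Nat.cast_sub hi.2]
        ring
      rw [e1, e2]; ring
    rw [Finset.sum_congr rfl hsum, ← Finset.sum_mul, binom_sum]
    have hpow : (1 - t) ^ n ≤ 1 - t := pow_le_of_le_one h1t.le (by linarith) (by omega)
    have hfac : (0:ℝ) ≤ t ^ (β - 2) * (1 - t) ^ (α - 1) := by positivity
    have e3 : t ^ (β - 1) = t * t ^ (β - 2) := by
      rw [show β - 1 = 1 + (β - 2) by ring, Real.rpow_add ht0, Real.rpow_one]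
    rw [e3]
    calc t * t ^ (β - 2) * (1 - t) ^ (α - 1)
        = t * (t ^ (β - 2) * (1 - t) ^ (α - 1)) := by ring
      _ ≤ (1 - (1 - t) ^ n) * (t ^ (β - 2) * (1 - t) ^ (α - 1)) := by
          apply mul_le_mul_of_nonneg_right (by linarith) hfac
  have : Beta α β ≤ S * Beta α β := by
    rw [key, Beta_symm α β]; exact lower
  have h1 : 1 * Beta α β ≤ S * Beta α β := by linarith
  exact le_of_mul_le_mul_right h1 hB

lemma Beta_le {a m : ℝ} (ha : 0 < a) (hm : 1 < m) :
    Beta a m ≤ Real.Gamma a * (m - 1) ^ (-a) := by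
  have hr : 0 < m - 1 := by linarith
  set g : ℝ → ℝ := fun t => t ^ (a - 1) * Real.exp (-((m - 1) * t)) with hg_def
  have hval := Real.integral_rpow_mul_exp_neg_mul_Ioi ha hr
  have hgpos : (0:ℝ) < (1 / (m - 1)) ^ a * Real.Gamma a := by
    have := Real.Gamma_pos_of_pos ha
    positivity
  have hgint : IntegrableOn g (Set.Ioi (0:ℝ)) := by
    by_contra h
    rw [MeasureTheory.integral_undef h] at hval
    exact hgpos.ne' hval.symm
  have step1 : Beta a m ≤ ∫ t in Set.Ioo (0:ℝ) 1, g t := by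
    rw [← betaIntegral_real ha (by linarith : (0:ℝ) < m)]
    apply MeasureTheory.setIntegral_mono_on
      (betaIntegrand_integrableOn ha (by linarith))
      (hgint.mono_set Set.Ioo_subset_Ioi_self) measurableSet_Ioo
    intro t ht
    obtain ⟨ht0, ht1⟩ := ht
    have h1t : (0:ℝ) ≤ 1 - t := by linarith
    apply mul_le_mul_of_nonneg_left _ (Real.rpow_nonneg ht0.le _)
    have h0 : 1 - t ≤ Real.exp (-t) := by
      have := Real.add_one_le_exp (-t); linarith
    calc (1 - t) ^ (m - 1) ≤ (Real.exp (-t)) ^ (m - 1) :=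
          Real.rpow_le_rpow h1t h0 hr.le
      _ = Real.exp (-((m - 1) * t)) := by
          rw [Real.rpow_def_of_pos (Real.exp_pos _), Real.log_exp]
          ring_nf
  have step2 : ∫ t in Set.Ioo (0:ℝ) 1, g t ≤ ∫ t in Set.Ioi (0:ℝ), g t := by
    apply MeasureTheory.setIntegral_mono_set hgint
    · filter_upwards [ae_restrict_mem measurableSet_Ioi] with t ht
      have : (0:ℝ) < t := ht
      simp only [hg_def]
      positivity
    · exact Filter.Eventually.of_forall (fun t ht => Set.Ioo_subset_Ioi_self ht)
  have heq : ∫ t in Set.Ioi (0:ℝ), g t = Real.Gamma a * (m - 1) ^ (-a) := by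
    rw [hg_def, hval, Real.rpow_neg hr.le, one_div, Real.inv_rpow hr.le]
    ring
  linarith [step1, step2, heq ▸ step2]

lemma term_tendsto {α β : ℝ} (hα : 0 < α) (hβ : 1 < β) (j : ℕ) (hj : 1 ≤ j) :
    Tendsto (fun n : ℕ => betaWeight α β n j * ((n - 1).choose (j - 1) : ℝ) * (1 / (j : ℝ)))
      atTop (nhds 0) := by
  have hB : 0 < Beta α β := Beta_pos hα (by linarith)
  set a : ℝ := (j : ℝ) + β - 1 with ha_def
  have hj1 : (1:ℝ) ≤ (j:ℝ) := by exact_mod_cast hj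
  have ha : 0 < a := by rw [ha_def]; linarith
  set D : ℝ := Real.Gamma a * 2 ^ a / (Beta α β * (j : ℝ)) with hD_def
  have hD0 : 0 ≤ D := by
    have := Real.Gamma_pos_of_pos ha
    have h2 : (0:ℝ) < 2 ^ a := Real.rpow_pos_of_pos (by norm_num) a
    positivity
  apply squeeze_zero' (g := fun n : ℕ => D * (n : ℝ) ^ (1 - β))
  · filter_upwards [eventually_ge_atTop j] with n hn
    have hjn : (j:ℝ) ≤ (n:ℝ) := by exact_mod_cast hn
    have hBa : 0 < Beta ((j : ℝ) + β - 1) ((n : ℝ) - (j : ℝ) + α) :=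
      Beta_pos (by linarith) (by linarith)
    have hn0 : (0:ℝ) ≤ (n:ℝ) := by positivity
    rw [betaWeight]
    positivity
  · filter_upwards [eventually_ge_atTop (2 * j + 2)] with n hn
    have hnj : j ≤ n := by omega
    have hn1 : 1 ≤ n := by omega
    have hn0 : (0:ℝ) < (n:ℝ) := by exact_mod_cast Nat.pos_of_ne_zero (by omega)
    have hjn : (j:ℝ) ≤ (n:ℝ) := by exact_mod_cast hnj
    have hcast : (2:ℝ) * j + 2 ≤ (n:ℝ) := by exact_mod_cast hn
    set m : ℝ := (n : ℝ) - (j : ℝ) + α with hm_def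
    have hm2 : (n:ℝ) / 2 ≤ m - 1 := by rw [hm_def]; linarith
    have hn2 : (0:ℝ) < (n:ℝ) / 2 := by positivity
    have hm : 1 < m := by linarith
    -- bound on Beta
    have h1 : Beta a m ≤ Real.Gamma a * ((n:ℝ) / 2) ^ (-a) := by
      refine (Beta_le ha hm).trans ?_
      apply mul_le_mul_of_nonneg_left _ (Real.Gamma_pos_of_pos ha).le
      rw [Real.rpow_neg hn2.le, Real.rpow_neg (by linarith : (0:ℝ) ≤ m - 1)]
      exact inv_anti₀ (Real.rpow_pos_of_pos hn2 a)
        (Real.rpow_le_rpow hn2.le hm2 ha.le)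
    -- bound on choose
    have h2 : ((n - 1).choose (j - 1) : ℝ) ≤ (n:ℝ) ^ (j - 1) := by
      have hh : (n - 1).choose (j - 1) ≤ n ^ (j - 1) :=
        le_trans (Nat.choose_le_pow _ _) (Nat.pow_le_pow_left (by omega) _)
      exact_mod_cast hh
    have hC0 : (0:ℝ) ≤ ((n - 1).choose (j - 1) : ℝ) := by positivity
    have hfac : (0:ℝ) ≤ (n:ℝ) / (Beta α β * (j:ℝ)) := by positivity
    have hT : betaWeight α β n j * ((n - 1).choose (j - 1) : ℝ) * (1 / (j : ℝ)) =
        Beta a m * ((n - 1).choose (j - 1) : ℝ) * ((n:ℝ) / (Beta α β * (j:ℝ))) := by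
      rw [betaWeight, ← ha_def, ← hm_def]; field_simp
    rw [hT]
    have hbnd : Beta a m * ((n - 1).choose (j - 1) : ℝ) * ((n:ℝ) / (Beta α β * (j:ℝ))) ≤
        (Real.Gamma a * ((n:ℝ) / 2) ^ (-a)) * ((n:ℝ) ^ (j - 1)) * ((n:ℝ) / (Beta α β * (j:ℝ))) := by
      apply mul_le_mul_of_nonneg_right _ hfac
      apply mul_le_mul h1 h2 hC0
      have := Real.Gamma_pos_of_pos ha
      positivity
    refine hbnd.trans (le_of_eq ?_)
    -- simplify RHS to D * n^(1-β)
    have e4 : ((n:ℝ) / 2) ^ (-a) = 2 ^ a * (n:ℝ) ^ (-a) := by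
      rw [Real.rpow_neg hn2.le, Real.div_rpow hn0.le (by norm_num : (0:ℝ) ≤ 2),
        Real.rpow_neg hn0.le]
      field_simp
    have e5 : (n:ℝ) ^ (j - 1) * (n:ℝ) = (n:ℝ) ^ (j:ℕ) := by
      rw [← pow_succ]
      congr 1
      omega
    have e6 : ((n:ℝ) ^ (j:ℕ) : ℝ) * (n:ℝ) ^ (-a) = (n:ℝ) ^ (1 - β) := by
      rw [← Real.rpow_natCast (n:ℝ) j, ← Real.rpow_add hn0]
      congr 1
      rw [ha_def]; ring
    rw [hD_def, e4]
    rw [show Real.Gamma a * (2 ^ a * (n:ℝ) ^ (-a)) * (n:ℝ) ^ (j - 1) * ((n:ℝ) / (Beta α β * (j:ℝ))) =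
        Real.Gamma a * 2 ^ a / (Beta α β * (j:ℝ)) * (((n:ℝ) ^ (j - 1) * (n:ℝ)) * (n:ℝ) ^ (-a)) by ring,
      e5, e6]
  · have h := (tendsto_rpow_neg_atTop (by linarith : (0:ℝ) < β - 1)).comp
      (tendsto_natCast_atTop_atTop (R := ℝ))
    have h2 : Tendsto (fun n : ℕ => (n : ℝ) ^ (1 - β)) atTop (nhds 0) := by
      have e : (fun n : ℕ => (n : ℝ) ^ (1 - β)) =
          (fun x : ℝ => x ^ (-(β - 1))) ∘ (Nat.cast : ℕ → ℝ) := by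
        funext n; simp only [Function.comp_apply]; congr 1; ring
      rw [e]; exact h
    simpa using h2.const_mul D

lemma term_nonneg {α β : ℝ} (hα : 0 < α) (hβ : 1 < β) {j n : ℕ} (hj : 1 ≤ j) (hn : j ≤ n) :
    0 ≤ betaWeight α β n j * ((n - 1).choose (j - 1) : ℝ) * (1 / (j : ℝ)) := by
  have hB : 0 < Beta α β := Beta_pos hα (by linarith)
  have hj1 : (1:ℝ) ≤ (j:ℝ) := by exact_mod_cast hj
  have hjn : (j:ℝ) ≤ (n:ℝ) := by exact_mod_cast hn
  have hBa : 0 < Beta ((j : ℝ) + β - 1) ((n : ℝ) - (j : ℝ) + α) :=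
    Beta_pos (by linarith) (by linarith)
  have hn0 : (0:ℝ) ≤ (n:ℝ) := by positivity
  rw [betaWeight]
  positivity

theorem beta_shapley_normalized_coefficient_vanishes
    (α β : ℝ) (hα : 0 < α) (hβ : 1 < β) (j : ℕ) (hj : 1 ≤ j) :
    Tendsto
      (fun n : ℕ =>
        (∑ i ∈ Finset.Icc 1 n,
            betaWeight α β n i * ((n - 1).choose (i - 1) : ℝ) * (1 / (i : ℝ)))⁻¹ *
          (betaWeight α β n j * ((n - 1).choose (j - 1) : ℝ) * (1 / (j : ℝ))))
      atTop (nhds 0) := by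
  apply squeeze_zero'
    (g := fun n : ℕ => betaWeight α β n j * ((n - 1).choose (j - 1) : ℝ) * (1 / (j : ℝ)))
  · filter_upwards [eventually_ge_atTop j] with n hn
    have hS : 1 ≤ ∑ i ∈ Finset.Icc 1 n,
        betaWeight α β n i * ((n - 1).choose (i - 1) : ℝ) * (1 / (i : ℝ)) :=
      sum_ge_one hα hβ (le_trans hj hn)
    exact mul_nonneg (inv_nonneg.mpr (by linarith)) (term_nonneg hα hβ hj hn)
  · filter_upwards [eventually_ge_atTop j] with n hn
    have hS : 1 ≤ ∑ i ∈ Finset.Icc 1 n,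
        betaWeight α β n i * ((n - 1).choose (i - 1) : ℝ) * (1 / (i : ℝ)) :=
      sum_ge_one hα hβ (le_trans hj hn)
    exact mul_le_of_le_one_left (term_nonneg hα hβ hj hn)
      (inv_le_one_of_one_le₀ hS)
  · exact term_tendsto hα hβ j hj
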